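/- MLP-mixer separation-rank upper bound (Theorem 5.3): let X₀ : 𝒳^M × 𝒳^M → ℝ^{n×n} satisfy sep(X₀) ≤ 2, and for i = 1,…,p let L_i be a mixer layer of the form (L_i ∘ Y)(A,B) = τ_i( (W_i · π_i(Y(A,B)))^{⊙2} ) + c_i · ρ_i(Y(A,B)) with fixed W_i ∈ ℝ^{n×n}, entry permutations τ_i, π_i, ρ_i, and c_i ∈ {0, 1}. Then the depth-p network T := L_p ∘ ⋯ ∘ L_1 ∘ X₀ satisfies sep(T) ≤ (2n² + 2)^{2^p}; in particular log sep(T) grows at most like a constant times 2^p. -/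

import Mathlib

open scoped BigOperators

/-- Separation rank of a scalar-valued function of two groups of variables. -/
noncomputable def sepRank {𝒳 : Type*} {M : ℕ}
    (y : (Fin M → 𝒳) → (Fin M → 𝒳) → ℝ) : ℕ∞ :=
  sInf {R : ℕ∞ | ∃ r : ℕ, R = (r : ℕ∞) ∧ ∃ g g' : Fin r → (Fin M → 𝒳) → ℝ,
    ∀ A B, y A B = ∑ i, g i A * g' i B}

/-- Separation rank of a matrix-valued function: maximum over output entries. -/
noncomputable def sepRankM {𝒳 : Type*} {M n m : ℕ}
    (f : (Fin M → 𝒳) → (Fin M → 𝒳) → Matrix (Fin n) (Fin m) ℝ) : ℕ∞ :=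
  ⨆ i : Fin n, ⨆ j : Fin m, sepRank (fun A B => f A B i j)

/-- Permute the entries of an `n × m` matrix according to a permutation of positions. -/
def permEntries {n m : ℕ} (σ : Equiv.Perm (Fin n × Fin m))
    (X : Matrix (Fin n) (Fin m) ℝ) : Matrix (Fin n) (Fin m) ℝ :=
  Matrix.of fun i j => X (σ (i, j)).1 (σ (i, j)).2

/-- A general MLP-mixer layer: permute, apply a weight matrix, square entrywise
(the σ₂ activation), permute again, and optionally add a permuted residual copy. -/
noncomputable def mixLayer {n : ℕ} (W : Matrix (Fin n) (Fin n) ℝ)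
    (τ π ρ : Equiv.Perm (Fin n × Fin n)) (c : ℝ)
    (Y : Matrix (Fin n) (Fin n) ℝ) : Matrix (Fin n) (Fin n) ℝ :=
  permEntries τ (Matrix.of fun i j => ((W * permEntries π Y) i j) ^ 2)
    + c • permEntries ρ Y

namespace SepAux

variable {𝒳 : Type*} {M : ℕ}

def HasSep (y : (Fin M → 𝒳) → (Fin M → 𝒳) → ℝ) (r : ℕ) : Prop :=
  ∃ g g' : Fin r → (Fin M → 𝒳) → ℝ, ∀ A B, y A B = ∑ i, g i A * g' i B

lemma sepRank_le_of_hasSep {y : (Fin M → 𝒳) → (Fin M → 𝒳) → ℝ} {r : ℕ}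
    (h : HasSep y r) : sepRank y ≤ (r : ℕ∞) :=
  sInf_le ⟨r, rfl, h⟩

lemma sepRank_le_coe {y : (Fin M → 𝒳) → (Fin M → 𝒳) → ℝ} {r : ℕ} :
    sepRank y ≤ (r : ℕ∞) ↔ ∃ r' ≤ r, HasSep y r' := by
  constructor
  · intro h
    have hlt : sepRank y < ((r + 1 : ℕ) : ℕ∞) := by
      refine lt_of_le_of_lt h ?_
      exact_mod_cast Nat.lt_succ_self r
    obtain ⟨x, hx, hxlt⟩ := sInf_lt_iff.mp hlt
    obtain ⟨r', rfl, hr'⟩ := hx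
    refine ⟨r', ?_, hr'⟩
    have : r' < r + 1 := by exact_mod_cast hxlt
    omega
  · rintro ⟨r', hr', h⟩
    refine le_trans (sepRank_le_of_hasSep h) ?_
    exact_mod_cast hr'

lemma hasSep_zero : HasSep (fun (_ _ : Fin M → 𝒳) => (0 : ℝ)) 0 :=
  ⟨Fin.elim0, Fin.elim0, by simp⟩

lemma HasSep.add {y z : (Fin M → 𝒳) → (Fin M → 𝒳) → ℝ} {r s : ℕ}
    (hy : HasSep y r) (hz : HasSep z s) :
    HasSep (fun A B => y A B + z A B) (r + s) := by
  obtain ⟨g, g', hg⟩ := hy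
  obtain ⟨h, h', hh⟩ := hz
  refine ⟨Fin.append g h, Fin.append g' h', fun A B => ?_⟩
  show y A B + z A B = _
  rw [hg, hh, Fin.sum_univ_add]
  simp [Fin.append_left, Fin.append_right]

lemma HasSep.mul {y z : (Fin M → 𝒳) → (Fin M → 𝒳) → ℝ} {r s : ℕ}
    (hy : HasSep y r) (hz : HasSep z s) :
    HasSep (fun A B => y A B * z A B) (r * s) := by
  obtain ⟨g, g', hg⟩ := hy
  obtain ⟨h, h', hh⟩ := hz
  refine ⟨fun i A => g (finProdFinEquiv.symm i).1 A * h (finProdFinEquiv.symm i).2 A,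
          fun i B => g' (finProdFinEquiv.symm i).1 B * h' (finProdFinEquiv.symm i).2 B,
          fun A B => ?_⟩
  calc y A B * z A B
      = ∑ q : Fin r × Fin s, (g q.1 A * h q.2 A) * (g' q.1 B * h' q.2 B) := by
        rw [hg, hh, Finset.sum_mul_sum, ← Finset.univ_product_univ, Finset.sum_product]
        exact Finset.sum_congr rfl fun a _ => Finset.sum_congr rfl fun b _ => by ring
    _ = _ := Fintype.sum_equiv finProdFinEquiv _ _ (fun q => by simp)

lemma HasSep.constMul {y : (Fin M → 𝒳) → (Fin M → 𝒳) → ℝ} {r : ℕ} (w : ℝ)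
    (hy : HasSep y r) : HasSep (fun A B => w * y A B) r := by
  obtain ⟨g, g', hg⟩ := hy
  refine ⟨fun i A => w * g i A, g', fun A B => ?_⟩
  show w * y A B = _
  rw [hg, Finset.mul_sum]
  exact Finset.sum_congr rfl fun i _ => by ring

lemma sepRank_add_le (y z : (Fin M → 𝒳) → (Fin M → 𝒳) → ℝ) :
    sepRank (fun A B => y A B + z A B) ≤ sepRank y + sepRank z := by
  rcases eq_or_ne (sepRank y) ⊤ with hy | hy
  · simp [hy]
  rcases eq_or_ne (sepRank z) ⊤ with hz | hz
  · simp [hz]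
  obtain ⟨a, ha⟩ := WithTop.ne_top_iff_exists.mp hy
  obtain ⟨b, hb⟩ := WithTop.ne_top_iff_exists.mp hz
  have ha1 : sepRank y ≤ ((a : ℕ) : ℕ∞) := by exact_mod_cast ha.ge
  have ha2 : ((a : ℕ) : ℕ∞) ≤ sepRank y := by exact_mod_cast ha.le
  have hb1 : sepRank z ≤ ((b : ℕ) : ℕ∞) := by exact_mod_cast hb.ge
  have hb2 : ((b : ℕ) : ℕ∞) ≤ sepRank z := by exact_mod_cast hb.le
  obtain ⟨r, hr, hry⟩ := sepRank_le_coe.mp ha1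
  obtain ⟨s, hs, hsz⟩ := sepRank_le_coe.mp hb1
  refine le_trans (sepRank_le_of_hasSep (hry.add hsz)) (le_trans ?_ (add_le_add ha2 hb2))
  exact_mod_cast Nat.add_le_add hr hs

lemma sepRank_mul_le (y z : (Fin M → 𝒳) → (Fin M → 𝒳) → ℝ) :
    sepRank (fun A B => y A B * z A B) ≤ sepRank y * sepRank z := by
  rcases eq_or_ne (sepRank y) ⊤ with hy | hy
  · rcases eq_or_ne (sepRank z) 0 with hz | hz
    · obtain ⟨r, hr, hrz⟩ := (sepRank_le_coe (r := 0)).mp (by rw [hz]; simp)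
      obtain rfl := Nat.le_zero.mp hr
      obtain ⟨g, g', hg⟩ := hrz
      have : (fun A B => y A B * z A B) = fun (A B : Fin M → 𝒳) => y A B * 0 := by
        funext A B; rw [hg A B]; simp
      rw [this]
      simp only [mul_zero]
      refine le_trans (sepRank_le_of_hasSep (hasSep_zero (𝒳 := 𝒳) (M := M))) ?_
      simp
    · simp [hy, hz]
  rcases eq_or_ne (sepRank z) ⊤ with hz | hz
  · rcases eq_or_ne (sepRank y) 0 with hy0 | hy0
    · obtain ⟨r, hr, hry⟩ := (sepRank_le_coe (r := 0)).mp (by rw [hy0]; simp)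
      obtain rfl := Nat.le_zero.mp hr
      obtain ⟨g, g', hg⟩ := hry
      have : (fun A B => y A B * z A B) = fun (A B : Fin M → 𝒳) => (0:ℝ) * z A B := by
        funext A B; rw [hg A B]; simp
      rw [this]
      simp only [zero_mul]
      refine le_trans (sepRank_le_of_hasSep (hasSep_zero (𝒳 := 𝒳) (M := M))) ?_
      simp
    · simp [hz, hy0]
  obtain ⟨a, ha⟩ := WithTop.ne_top_iff_exists.mp hy
  obtain ⟨b, hb⟩ := WithTop.ne_top_iff_exists.mp hz
  have ha1 : sepRank y ≤ ((a : ℕ) : ℕ∞) := by exact_mod_cast ha.ge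
  have ha2 : ((a : ℕ) : ℕ∞) ≤ sepRank y := by exact_mod_cast ha.le
  have hb1 : sepRank z ≤ ((b : ℕ) : ℕ∞) := by exact_mod_cast hb.ge
  have hb2 : ((b : ℕ) : ℕ∞) ≤ sepRank z := by exact_mod_cast hb.le
  obtain ⟨r, hr, hry⟩ := sepRank_le_coe.mp ha1
  obtain ⟨s, hs, hsz⟩ := sepRank_le_coe.mp hb1
  refine le_trans (sepRank_le_of_hasSep (hry.mul hsz)) (le_trans ?_ (mul_le_mul' ha2 hb2))
  exact_mod_cast Nat.mul_le_mul hr hs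

lemma sepRank_const_mul_le (w : ℝ) (y : (Fin M → 𝒳) → (Fin M → 𝒳) → ℝ) :
    sepRank (fun A B => w * y A B) ≤ sepRank y := by
  rcases eq_or_ne (sepRank y) ⊤ with hy | hy
  · simp [hy]
  obtain ⟨a, ha⟩ := WithTop.ne_top_iff_exists.mp hy
  have ha1 : sepRank y ≤ ((a : ℕ) : ℕ∞) := by exact_mod_cast ha.ge
  have ha2 : ((a : ℕ) : ℕ∞) ≤ sepRank y := by exact_mod_cast ha.le
  obtain ⟨r, hr, hry⟩ := sepRank_le_coe.mp ha1
  refine le_trans (sepRank_le_of_hasSep (hry.constMul w)) (le_trans ?_ ha2)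
  exact_mod_cast hr

lemma sepRank_sum_le {ι : Type*} (s : Finset ι)
    (f : ι → (Fin M → 𝒳) → (Fin M → 𝒳) → ℝ) :
    sepRank (fun A B => ∑ k ∈ s, f k A B) ≤ ∑ k ∈ s, sepRank (f k) := by
  induction s using Finset.cons_induction with
  | empty => simpa using sepRank_le_of_hasSep (hasSep_zero (𝒳 := 𝒳) (M := M))
  | cons a s ha ih =>
    simp only [Finset.sum_cons]
    exact le_trans (sepRank_add_le _ _) (add_le_add_right ih _)

end SepAux

open SepAux

/-- MLP-mixer separation-rank upper bound (Theorem 5.3).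
`F i` is the function computed by the first `i` layers of the network. -/
theorem sepRank_mixer_network {𝒳 : Type*} {M n : ℕ} (p : ℕ)
    (W : ℕ → Matrix (Fin n) (Fin n) ℝ)
    (τ π ρ : ℕ → Equiv.Perm (Fin n × Fin n))
    (c : ℕ → ℝ) (hc : ∀ i, c i = 0 ∨ c i = 1)
    (F : ℕ → (Fin M → 𝒳) → (Fin M → 𝒳) → Matrix (Fin n) (Fin n) ℝ)
    (h0 : sepRankM (F 0) ≤ 2)
    (hstep : ∀ i < p,
      F (i + 1) = fun A B => mixLayer (W i) (τ i) (π i) (ρ i) (c i) (F i A B)) :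
    sepRankM (F p) ≤ (2 * (n : ℕ∞) ^ 2 + 2) ^ (2 ^ p) := by
  have entry_le : ∀ (G : (Fin M → 𝒳) → (Fin M → 𝒳) → Matrix (Fin n) (Fin n) ℝ)
      (a b : Fin n), sepRank (fun A B => G A B a b) ≤ sepRankM G := fun G a b =>
    le_iSup₂ (f := fun a b => sepRank fun A B => G A B a b) a b
  set N : ℕ∞ := (n : ℕ∞) ^ 2 with hN
  have key : ∀ i, i ≤ p → (N + 1) * sepRankM (F i) ≤ (2 * N + 2) ^ (2 ^ i) := by
    intro i
    induction i with
    | zero =>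
      intro _
      calc (N + 1) * sepRankM (F 0) ≤ (N + 1) * 2 := mul_le_mul_right h0 _
        _ = (2 * N + 2) ^ (2 ^ 0) := by rw [pow_zero, pow_one]; ring
    | succ i ih =>
      intro hip
      specialize ih (Nat.le_of_succ_le hip)
      set S := sepRankM (F i) with hS
      have hF := hstep i (by omega)
      have hSstep : sepRankM (F (i + 1)) ≤ (n : ℕ∞) * S * ((n : ℕ∞) * S) + S := by
        apply iSup₂_le; intro a b
        set u : (Fin M → 𝒳) → (Fin M → 𝒳) → ℝ := fun A B =>
          ∑ k : Fin n, W i (τ i (a, b)).1 k *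
            F i A B (π i (k, (τ i (a, b)).2)).1 (π i (k, (τ i (a, b)).2)).2 with hu
        set v : (Fin M → 𝒳) → (Fin M → 𝒳) → ℝ := fun A B =>
          c i * F i A B (ρ i (a, b)).1 (ρ i (a, b)).2 with hv
        have hEq : (fun A B => F (i + 1) A B a b) = fun A B => u A B * u A B + v A B := by
          funext A B
          rw [hF]
          simp only [hu, hv, mixLayer, permEntries, Matrix.add_apply, Matrix.smul_apply,
            Matrix.of_apply, Matrix.mul_apply, smul_eq_mul, sq]
        rw [hEq]
        have hsum : sepRank u ≤ (n : ℕ∞) * S := by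
          refine le_trans (sepRank_sum_le Finset.univ fun k A B =>
            W i (τ i (a, b)).1 k *
              F i A B (π i (k, (τ i (a, b)).2)).1 (π i (k, (τ i (a, b)).2)).2) ?_
          calc ∑ k : Fin n, sepRank (fun A B => W i (τ i (a, b)).1 k *
                F i A B (π i (k, (τ i (a, b)).2)).1 (π i (k, (τ i (a, b)).2)).2)
              ≤ ∑ _k : Fin n, S := Finset.sum_le_sum fun k _ =>
                le_trans (sepRank_const_mul_le _ _) (entry_le (F i) _ _)
            _ = (n : ℕ∞) * S := by
                rw [Finset.sum_const, Finset.card_univ, Fintype.card_fin, nsmul_eq_mul]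
        calc sepRank (fun A B => u A B * u A B + v A B)
            ≤ sepRank (fun A B => u A B * u A B) + sepRank v := sepRank_add_le _ _
          _ ≤ (n : ℕ∞) * S * ((n : ℕ∞) * S) + S := by
              refine add_le_add ?_ ?_
              · exact le_trans (sepRank_mul_le u u) (mul_le_mul' hsum hsum)
              · exact le_trans (sepRank_const_mul_le _ _) (entry_le (F i) _ _)
      have hSS : S ≤ S * S := by
        rcases eq_or_ne S 0 with h | h
        · simp [h]
        · conv_lhs => rw [← mul_one S]
          exact mul_le_mul_right (ENat.one_le_iff_ne_zero.mpr h) S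
      calc (N + 1) * sepRankM (F (i + 1))
          ≤ (N + 1) * ((n : ℕ∞) * S * ((n : ℕ∞) * S) + S) := mul_le_mul_right hSstep _
        _ = N * (N + 1) * (S * S) + (N + 1) * S := by rw [hN]; ring
        _ ≤ N * (N + 1) * (S * S) + (N + 1) * (S * S) :=
            add_le_add_right (mul_le_mul_right hSS _) _
        _ = ((N + 1) * S) * ((N + 1) * S) := by ring
        _ ≤ (2 * N + 2) ^ (2 ^ i) * (2 * N + 2) ^ (2 ^ i) := mul_le_mul' ih ih
        _ = (2 * N + 2) ^ (2 ^ (i + 1)) := by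
            rw [← pow_add]
            congr 1
            rw [pow_succ, mul_two]
  have hk := key p le_rfl
  calc sepRankM (F p) = 1 * sepRankM (F p) := (one_mul _).symm
    _ ≤ (N + 1) * sepRankM (F p) := mul_le_mul_left le_add_self _
    _ ≤ (2 * N + 2) ^ (2 ^ p) := hk
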